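/- Fix r₁, r₂ > 0 and ξ₁, ξ₂ ∈ sp(2). Set α₁ = y₂\bar{y₁} - y₁\bar{y₂}, α₂ = \bar{y₂}y₁ - \bar{y₁}y₂, β₁ = x₁x₂ - x₂x₁, β₂ = z₁z₂ - z₂z₁, γ₁ = x₁y₂ - x₂y₁, γ₂ = y₁z₂ - y₂z₁, D(ξ₁,ξ₂) = (1/2)(1-r₁)(x₁y₂ + x₂y₁) + (1/2)(r₂-1)(y₁z₂ + y₂z₁). Then with |ξ|² = (r₁/2)|x|² + |y|² + (r₂/2)|z|², the following algebraic identity holds: (r₁/8)|α₁+β₁|² + (1/4)|γ₁+γ₂|² + (r₂/8)|α₂+β₂|² + |D(ξ₁,ξ₂)|² - ⟨(1-r₁)x₁y₁ + (r₂-1)y₁z₁, (1-r₁)x₂y₂ + (r₂-1)y₂z₂⟩ + ((1-r₁)/2)⟨α₁+β₁, α₁⟩ + ((r₁-1)/2)⟨γ₁+γ₂, γ₁⟩ + ((r₂-1)/2)⟨γ₁+γ₂, γ₂⟩ + ((1-r₂)/2)⟨α₂+β₂, α₂⟩ = (1/4)|r₁γ₁+r₂γ₂|² + (r₁/8)|β₁+(3-2r₁)α₁|²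 + (r₂/8)|β₂+(3-2r₂)α₂|² + (1/2)((1-r₁)³+(1-r₂)³)|α₁|². -/

import Mathlib

open Quaternion
open scoped RealInnerProductSpace

/-- The algebraic identity rewriting the sectional-curvature expression
⟨R(ξ₁,ξ₂)ξ₁,ξ₂⟩ of the left-invariant metric g_{(r₁,r₂)} on Sp(2) in a
manifestly sign-definite form. -/
theorem sp2_curvature_identity (r₁ r₂ : ℝ) (h₁ : 0 < r₁) (h₂ : 0 < r₂)
    (x₁ y₁ z₁ x₂ y₂ z₂ : ℍ[ℝ])
    (hx₁ : x₁.re = 0) (hz₁ : z₁.re = 0) (hx₂ : x₂.re = 0) (hz₂ : z₂.re = 0) :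
    (let α₁ : ℍ[ℝ] := y₂ * star y₁ - y₁ * star y₂
     let α₂ : ℍ[ℝ] := star y₂ * y₁ - star y₁ * y₂
     let β₁ : ℍ[ℝ] := x₁ * x₂ - x₂ * x₁
     let β₂ : ℍ[ℝ] := z₁ * z₂ - z₂ * z₁
     let γ₁ : ℍ[ℝ] := x₁ * y₂ - x₂ * y₁
     let γ₂ : ℍ[ℝ] := y₁ * z₂ - y₂ * z₁
     let D : ℍ[ℝ] := (1 / 2 * (1 - r₁)) • (x₁ * y₂ + x₂ * y₁)
        + (1 / 2 * (r₂ - 1)) • (y₁ * z₂ + y₂ * z₁)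
     (r₁ / 8) * ‖α₁ + β₁‖ ^ 2 + (1 / 4) * ‖γ₁ + γ₂‖ ^ 2 + (r₂ / 8) * ‖α₂ + β₂‖ ^ 2
       + ‖D‖ ^ 2
       - ⟪(1 - r₁) • (x₁ * y₁) + (r₂ - 1) • (y₁ * z₁),
           (1 - r₁) • (x₂ * y₂) + (r₂ - 1) • (y₂ * z₂)⟫
       + ((1 - r₁) / 2) * ⟪α₁ + β₁, α₁⟫ + ((r₁ - 1) / 2) * ⟪γ₁ + γ₂, γ₁⟫
       + ((r₂ - 1) / 2) * ⟪γ₁ + γ₂, γ₂⟫ + ((1 - r₂) / 2) * ⟪α₂ + β₂, α₂⟫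
     = (1 / 4) * ‖r₁ • γ₁ + r₂ • γ₂‖ ^ 2 + (r₁ / 8) * ‖β₁ + (3 - 2 * r₁) • α₁‖ ^ 2
       + (r₂ / 8) * ‖β₂ + (3 - 2 * r₂) • α₂‖ ^ 2
       + (1 / 2) * ((1 - r₁) ^ 3 + (1 - r₂) ^ 3) * ‖α₁‖ ^ 2) := by
  simp only [← real_inner_self_eq_norm_sq, inner_def, re_mul, re_add, re_sub, re_smul,
    re_star, imI_star, imJ_star, imK_star, imI_mul, imJ_mul, imK_mul, imI_add, imJ_add,
    imK_add, imI_sub, imJ_sub, imK_sub, imI_smul, imJ_smul, imK_smul, smul_eq_mul,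
    hx₁, hx₂, hz₁, hz₂]
  ring
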